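/- The set of extreme points of the 24-cell 𝒞 = convexHull ℝ V is exactly V; in particular 𝒞 has exactly 24 vertices. -/

import Mathlib

open scoped RealInnerProductSpace

/-- The `i`-th standard basis vector of `EuclideanSpace ℝ (Fin 4)`. -/
noncomputable def stdV (i : Fin 4) : EuclideanSpace ℝ (Fin 4) :=
  EuclideanSpace.single i (1 : ℝ)

/-- The 24 vertices of the 24-cell: all permutations of the coordinates of `(±1, ±1, 0, 0)`. -/
def cellV : Set (EuclideanSpace ℝ (Fin 4)) :=
  {x | ∃ i j : Fin 4, i ≠ j ∧ ∃ ε δ : ℝ, (ε = 1 ∨ ε = -1) ∧ (δ = 1 ∨ δ = -1) ∧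
    x = ε • stdV i + δ • stdV j}

noncomputable def sgn (b : Bool) : ℝ := if b then 1 else -1

lemma sgn_cases (b : Bool) : sgn b = 1 ∨ sgn b = -1 := by cases b <;> simp [sgn]

lemma sgn_ne_zero (b : Bool) : sgn b ≠ 0 := by cases b <;> norm_num [sgn]

lemma sgn_injective : Function.Injective sgn := by
  intro b c h
  cases b <;> cases c <;> first | rfl | (norm_num [sgn] at h)

abbrev cellT := {p : Fin 4 × Fin 4 // p.1 < p.2} × Bool × Bool

noncomputable def cellF (t : cellT) : EuclideanSpace ℝ (Fin 4) :=
  sgn t.2.1 • stdV t.1.1.1 + sgn t.2.2 • stdV t.1.1.2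

lemma cellF_apply (t : cellT) (k : Fin 4) :
    cellF t k = (if k = t.1.1.1 then sgn t.2.1 else 0)
      + (if k = t.1.1.2 then sgn t.2.2 else 0) := by
  obtain ⟨⟨⟨i, j⟩, h⟩, b, c⟩ := t
  simp [cellF, stdV, EuclideanSpace.single_apply, mul_ite]

lemma cellF_inj : Function.Injective cellF := by
  rintro ⟨⟨⟨i₁, j₁⟩, h₁⟩, b₁, c₁⟩ ⟨⟨⟨i₂, j₂⟩, h₂⟩, b₂, c₂⟩ h
  have hk : ∀ k : Fin 4,
      (if k = i₁ then sgn b₁ else 0) + (if k = j₁ then sgn c₁ else 0)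
        = (if k = i₂ then sgn b₂ else 0) + (if k = j₂ then sgn c₂ else 0) := fun k => by
    simpa only [cellF_apply] using congrArg (fun v => v k) h
  have hii : i₁ = i₂ := by
    by_contra hne
    have hij : i₁ = j₂ := by
      by_contra h'
      have e := hk i₁
      rw [if_pos rfl, if_neg h₁.ne, add_zero, if_neg hne, if_neg h', add_zero] at e
      exact sgn_ne_zero b₁ e
    have hji : i₂ = j₁ := by
      by_contra h'
      have e := hk i₂
      rw [if_pos rfl, if_neg h₂.ne, add_zero, if_neg (Ne.symm hne), if_neg h', zero_add] at e
      exact sgn_ne_zero b₂ e.symm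
    exact absurd ((h₂.trans_eq hij.symm).trans (h₁.trans_eq hji.symm)) (lt_irrefl i₂)
  subst hii
  have hjj : j₁ = j₂ := by
    by_contra h'
    have e := hk j₁
    rw [if_neg h₁.ne', if_pos rfl, zero_add, if_neg h₁.ne', if_neg h', add_zero] at e
    exact sgn_ne_zero c₁ e
  subst hjj
  have eb := hk i₁
  rw [if_pos rfl, if_neg h₁.ne, add_zero, if_pos rfl, if_neg h₁.ne, add_zero] at eb
  have ec := hk j₁
  rw [if_neg h₁.ne', if_pos rfl, zero_add, if_neg h₁.ne', if_pos rfl, zero_add] at ec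
  rw [sgn_injective eb, sgn_injective ec]

lemma cellV_eq_range : cellV = Set.range cellF := by
  ext x
  constructor
  · rintro ⟨i, j, hij, ε, δ, hε, hδ, rfl⟩
    obtain ⟨b, rfl⟩ : ∃ b, sgn b = ε := by
      rcases hε with rfl | rfl
      exacts [⟨true, rfl⟩, ⟨false, rfl⟩]
    obtain ⟨c, rfl⟩ : ∃ c, sgn c = δ := by
      rcases hδ with rfl | rfl
      exacts [⟨true, rfl⟩, ⟨false, rfl⟩]
    rcases hij.lt_or_gt with hlt | hlt
    · exact ⟨⟨⟨(i, j), hlt⟩, b, c⟩, rfl⟩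
    · exact ⟨⟨⟨(j, i), hlt⟩, c, b⟩, add_comm _ _⟩
  · rintro ⟨⟨⟨⟨i, j⟩, hlt⟩, b, c⟩, rfl⟩
    exact ⟨i, j, hlt.ne, sgn b, sgn c, sgn_cases b, sgn_cases c, rfl⟩

lemma norm_cellV {x : EuclideanSpace ℝ (Fin 4)} (hx : x ∈ cellV) : ‖x‖ = Real.sqrt 2 := by
  obtain ⟨i, j, hij, ε, δ, hε, hδ, rfl⟩ := hx
  have hinner : ⟪ε • stdV i, δ • stdV j⟫ = 0 := by
    rw [real_inner_smul_left, real_inner_smul_right]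
    simp [stdV, EuclideanSpace.inner_single_left, EuclideanSpace.single_apply, hij.symm]
  have h1 : ‖ε • stdV i‖ = 1 := by
    rw [norm_smul, stdV, EuclideanSpace.norm_single]
    rcases hε with rfl | rfl <;> norm_num
  have h2 : ‖δ • stdV j‖ = 1 := by
    rw [norm_smul, stdV, EuclideanSpace.norm_single]
    rcases hδ with rfl | rfl <;> norm_num
  have hsq : ‖ε • stdV i + δ • stdV j‖ ^ 2 = 2 := by
    rw [norm_add_sq_real, hinner, h1, h2]; ring
  rw [← Real.sqrt_sq (norm_nonneg (ε • stdV i + δ • stdV j)), hsq]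

lemma mem_extremePoints_closedBall_of_norm_eq {E : Type*} [NormedAddCommGroup E]
    [NormedSpace ℝ E] [StrictConvexSpace ℝ E] {v : E} {r : ℝ} (hv : ‖v‖ = r) :
    v ∈ (Metric.closedBall (0 : E) r).extremePoints ℝ := by
  refine mem_extremePoints.2 ⟨mem_closedBall_zero_iff.2 hv.le, ?_⟩
  intro x hx y hy hseg
  by_cases hxy : x = y
  · subst hxy
    rw [openSegment_same, Set.mem_singleton_iff] at hseg
    exact ⟨hseg.symm, hseg.symm⟩
  · have hball := openSegment_subset_ball_of_ne hx hy hxy hseg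
    rw [mem_ball_zero_iff, hv] at hball
    exact absurd hball (lt_irrefl r)

/-- The extreme points of the 24-cell are exactly the 24 elements of `V`. -/
theorem cell24_extremePoints :
    (convexHull ℝ cellV).extremePoints ℝ = cellV ∧ cellV.ncard = 24 := by
  constructor
  · apply subset_antisymm extremePoints_convexHull_subset
    intro v hv
    have hsub : convexHull ℝ cellV ⊆ Metric.closedBall 0 (Real.sqrt 2) :=
      convexHull_min (fun x hx => mem_closedBall_zero_iff.2 (norm_cellV hx).le)
        (convex_closedBall _ _)
    exact inter_extremePoints_subset_extremePoints_of_subset hsub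
      ⟨subset_convexHull ℝ _ hv, mem_extremePoints_closedBall_of_norm_eq (norm_cellV hv)⟩
  · rw [cellV_eq_range, ← Nat.card_coe_set_eq, Nat.card_range_of_injective cellF_inj,
      Nat.card_eq_fintype_card]
    decide
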